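/- Let f(q) be a quaternion polynomial of degree n ≥ 1, r > 0 a real number, and 1 ≤ k ≤ n. Then max over |q| = r of |f^(k)(q)| ≤ (n(n−1)⋯(n−k+1)/r^k) · max over |q| = r of |f(q)|. -/

import Mathlib

open Polynomial

namespace BernsteinAux

noncomputable def revP (m : ℕ) (p : ℂ[X]) : ℂ[X] :=
  ∑ j ∈ Finset.range (m + 1), C (p.coeff j) * X ^ (m - j)

theorem revP_eval (m : ℕ) (p : ℂ[X]) (hp : p.natDegree ≤ m) {w : ℂ} (hw : w ≠ 0) :
    (revP m p).eval w = w ^ m * p.eval w⁻¹ := by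
  rw [eval_eq_sum_range' (lt_of_le_of_lt hp (Nat.lt_succ_self m)), revP, eval_finset_sum,
    Finset.mul_sum]
  refine Finset.sum_congr rfl fun j hj => ?_
  rw [Finset.mem_range, Nat.lt_succ_iff] at hj
  rw [eval_mul, eval_C, eval_pow, eval_X, pow_sub₀ _ hw hj, inv_pow]
  field_simp

theorem revP_bound (m : ℕ) (p : ℂ[X]) (hp : p.natDegree ≤ m) {r M : ℝ} (hr : 0 < r)
    (hM : ∀ z : ℂ, ‖z‖ = r → ‖p.eval z‖ ≤ M) :
    ∀ w : ℂ, ‖w‖ ≤ r⁻¹ → ‖(revP m p).eval w‖ ≤ M / r ^ m := by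
  intro w hw
  have hr' : (0:ℝ) < r⁻¹ := by positivity
  have := Complex.norm_le_of_forall_mem_frontier_norm_le (U := Metric.ball (0:ℂ) r⁻¹)
    (z := w) Metric.isBounded_ball
    ((revP m p).differentiable.diffContOnCl) (C := M / r ^ m) ?_ ?_
  · exact this
  · intro z hz
    rw [frontier_ball (0:ℂ) (ne_of_gt hr')] at hz
    rw [mem_sphere_zero_iff_norm] at hz
    have hz0 : z ≠ 0 := by
      intro h; rw [h] at hz; simp at hz; linarith
    rw [revP_eval m p hp hz0, norm_mul, norm_pow, hz]
    have hinv : ‖z⁻¹‖ = r := by rw [norm_inv, hz, inv_inv]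
    have := hM _ hinv
    calc (r⁻¹) ^ m * ‖p.eval z⁻¹‖ ≤ (r⁻¹) ^ m * M := by
          apply mul_le_mul_of_nonneg_left this (by positivity)
      _ = M / r ^ m := by rw [inv_pow]; ring
  · rw [closure_ball (0:ℂ) (ne_of_gt hr')]
    rwa [Metric.mem_closedBall, dist_zero_right]

theorem growth_bound (m : ℕ) (p : ℂ[X]) (hp : p.natDegree ≤ m) {r M : ℝ} (hr : 0 < r)
    (hM : ∀ z : ℂ, ‖z‖ = r → ‖p.eval z‖ ≤ M) :
    ∀ z : ℂ, r ≤ ‖z‖ → ‖p.eval z‖ ≤ M / r ^ m * ‖z‖ ^ m := by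
  intro z hz
  have hz0 : z ≠ 0 := by
    intro h; rw [h] at hz; simp at hz; exact absurd (le_antisymm hz hr.le) (ne_of_gt hr)
  have hw : ‖z⁻¹‖ ≤ r⁻¹ := by
    rw [norm_inv]; exact inv_anti₀ hr hz
  have h1 := revP_bound m p hp hr hM z⁻¹ hw
  rw [revP_eval m p hp (inv_ne_zero hz0), inv_inv, norm_mul, norm_pow, norm_inv] at h1
  have hzn : (0:ℝ) < ‖z‖ := norm_pos_iff.mpr hz0
  rw [inv_pow, ← div_eq_inv_mul, div_le_div_iff₀ (by positivity) (by positivity)] at h1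
  rw [div_mul_eq_mul_div, le_div_iff₀ (by positivity : (0:ℝ) < r ^ m)]
  linarith [h1]

theorem coeff_bound (m : ℕ) (p : ℂ[X]) (hp : p.natDegree ≤ m) {r M : ℝ} (hr : 0 < r)
    (hM : ∀ z : ℂ, ‖z‖ = r → ‖p.eval z‖ ≤ M) : ‖p.coeff m‖ ≤ M / r ^ m := by
  have h0 := revP_bound m p hp hr hM 0 (by simp; positivity)
  have : (revP m p).eval 0 = p.coeff m := by
    rw [revP, eval_finset_sum]
    rw [Finset.sum_eq_single m]
    · simp
    · intro j hj hjm
      rw [Finset.mem_range, Nat.lt_succ_iff] at hj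
      have hmj : m - j ≠ 0 := by omega
      simp [zero_pow hmj]
    · intro h; simp at h
  rwa [this] at h0

theorem deriv_over_roots (s : Multiset ℂ) (w : ℂ)
    (hne : ((s.map fun a => X - C a).prod.eval w) ≠ 0) :
    ((s.map fun a => X - C a).prod.derivative.eval w)
      = ((s.map fun a => X - C a).prod.eval w) * (s.map fun a => (w - a)⁻¹).sum := by
  induction s using Multiset.induction_on with
  | empty => simp
  | cons a t ih =>
    rw [Multiset.map_cons, Multiset.prod_cons, Multiset.map_cons, Multiset.sum_cons] at *
    have hprod : ((X - C a) * (t.map fun b => X - C b).prod).eval w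
        = (w - a) * ((t.map fun b => X - C b).prod.eval w) := by simp
    rw [hprod] at hne
    have ha : w - a ≠ 0 := fun h => hne (by rw [h, zero_mul])
    have ht : ((t.map fun b => X - C b).prod.eval w) ≠ 0 := fun h => hne (by rw [h, mul_zero])
    rw [derivative_mul, eval_add, eval_mul, eval_mul, hprod, ih ht]
    have hd : (X - C a).derivative = 1 := by simp
    rw [hd]
    simp only [eval_one, eval_sub, eval_X, eval_C, one_mul]
    field_simp

theorem multiset_sum_pos {s : Multiset ℝ} (h : ∀ x ∈ s, 0 < x) (hne : s ≠ 0) : 0 < s.sum := by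
  obtain ⟨a, ha⟩ := Multiset.exists_mem_of_ne_zero hne
  obtain ⟨t, rfl⟩ := Multiset.exists_cons_of_mem ha
  rw [Multiset.sum_cons]
  have h1 : 0 < a := h a (Multiset.mem_cons_self a t)
  have h2 : 0 ≤ t.sum := Multiset.sum_nonneg fun x hx => (h x (Multiset.mem_cons_of_mem hx)).le
  linarith

theorem sum_inv_pos_re {s : Multiset ℂ} {r : ℝ} {w : ℂ} (hr : 0 < r) (hs : s ≠ 0)
    (hroots : ∀ a ∈ s, ‖a‖ < r) (hw : r ≤ ‖w‖) :
    0 < (w * (s.map fun a => (w - a)⁻¹).sum).re := by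
  have hmul : w * (s.map fun a => (w - a)⁻¹).sum = (s.map fun a => w * (w - a)⁻¹).sum := by
    rw [Multiset.sum_map_mul_left]
  rw [hmul]
  have hre : (s.map fun a => w * (w - a)⁻¹).sum.re
      = ((s.map fun a => w * (w - a)⁻¹).map Complex.re).sum := by
    simpa using map_multiset_sum Complex.reAddGroupHom (s.map fun a => w * (w - a)⁻¹)
  rw [hre, Multiset.map_map]
  apply multiset_sum_pos
  · intro x hx
    rw [Multiset.mem_map] at hx
    obtain ⟨a, ha, rfl⟩ := hx
    have har := hroots a ha
    have haw : ‖a‖ < ‖w‖ := lt_of_lt_of_le har hw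
    have hd : w - a ≠ 0 := by
      intro h
      have hwa : w = a := by linear_combination h
      rw [hwa] at haw; exact lt_irrefl _ haw
    simp only [Function.comp_apply]
    have hN : 0 < Complex.normSq (w - a) := Complex.normSq_pos.mpr hd
    have hsq : a.re ^ 2 + a.im ^ 2 < w.re ^ 2 + w.im ^ 2 := by
      have h2 := pow_lt_pow_left₀ haw (norm_nonneg a) two_ne_zero
      rwa [Complex.sq_norm, Complex.sq_norm,
        Complex.normSq_apply, Complex.normSq_apply, ← pow_two, ← pow_two, ← pow_two,
        ← pow_two] at h2
    have hkey : 0 < w.re * (w - a).re + w.im * (w - a).im := by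
      simp only [Complex.sub_re, Complex.sub_im]
      nlinarith [sq_nonneg (w.re * a.im - w.im * a.re), sq_nonneg a.re, sq_nonneg a.im,
        sq_nonneg (w.re + a.re), sq_nonneg (w.im + a.im)]
    rw [show w * (w - a)⁻¹ = w / (w - a) from (div_eq_mul_inv w _).symm, Complex.div_re,
      ← add_div]
    exact div_pos hkey hN
  · intro h
    rw [Multiset.map_eq_zero] at h
    exact hs h

theorem no_crit_outside {G : ℂ[X]} {r : ℝ} (hr : 0 < r) (hG : G ≠ 0)
    (hdeg : 1 ≤ G.natDegree) (hroots : ∀ a ∈ G.roots, ‖a‖ < r)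
    {w : ℂ} (hw : r ≤ ‖w‖) : G.derivative.eval w ≠ 0 := by
  have hsplit : G.roots.card = G.natDegree :=
    (Polynomial.splits_iff_card_roots.mp (IsAlgClosed.splits G))
  have hfact := Polynomial.C_leadingCoeff_mul_prod_multiset_X_sub_C (p := G) hsplit
  set P : ℂ[X] := (G.roots.map fun a => X - C a).prod with hP
  have hGevalw : G.eval w ≠ 0 := by
    intro h
    have : w ∈ G.roots := by
      rw [Polynomial.mem_roots hG]; exact h
    exact absurd hw (not_le.mpr (hroots w this))
  have hPw : P.eval w ≠ 0 := by
    intro h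
    apply hGevalw
    rw [← hfact, eval_mul, h, mul_zero]
  have hsum := deriv_over_roots G.roots w hPw
  have hs0 : G.roots ≠ 0 := by
    intro h
    rw [h, Multiset.card_zero] at hsplit
    omega
  have hpos := sum_inv_pos_re hr hs0 hroots hw
  have hsumne : (G.roots.map fun a => (w - a)⁻¹).sum ≠ 0 := by
    intro h
    rw [h, mul_zero] at hpos
    simp at hpos
  intro hcrit
  have hderiv : G.derivative = C G.leadingCoeff * P.derivative := by
    conv_lhs => rw [← hfact]
    rw [derivative_mul, derivative_C, zero_mul, zero_add]
  rw [hderiv, eval_mul, eval_C] at hcrit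
  have hlc : G.leadingCoeff ≠ 0 := leadingCoeff_ne_zero.mpr hG
  have : P.derivative.eval w = 0 := by
    rcases mul_eq_zero.mp hcrit with h | h
    · exact absurd h hlc
    · exact h
  rw [hsum] at this
  rcases mul_eq_zero.mp this with h | h
  · exact hPw h
  · exact hsumne h

theorem complex_bernstein {m : ℕ} (hm : 1 ≤ m) (p : ℂ[X]) (hp : p.natDegree ≤ m)
    {r M : ℝ} (hr : 0 < r) (hM : ∀ z : ℂ, ‖z‖ = r → ‖p.eval z‖ ≤ M)
    {z₀ : ℂ} (hz₀ : ‖z₀‖ = r) : ‖p.derivative.eval z₀‖ ≤ m * M / r := by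
  have hM0 : 0 ≤ M := by
    have h1 : ‖((r:ℝ) : ℂ)‖ = r := by
      rw [Complex.norm_real, Real.norm_eq_abs, abs_of_pos hr]
    exact le_trans (norm_nonneg _) (hM _ h1)
  by_contra hcon
  push_neg at hcon
  have hz0ne : z₀ ≠ 0 := by
    intro h; rw [h, norm_zero] at hz₀; exact absurd hz₀.symm (ne_of_gt hr)
  have hmz : (m : ℂ) * z₀ ^ (m - 1) ≠ 0 := by
    apply mul_ne_zero
    · exact_mod_cast Nat.cast_ne_zero.mpr (by omega)
    · exact pow_ne_zero _ hz0ne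
  set lam : ℂ := p.derivative.eval z₀ / ((m : ℂ) * z₀ ^ (m - 1)) with hlam
  have hlamnorm : M / r ^ m < ‖lam‖ := by
    rw [hlam, norm_div, norm_mul, norm_pow, hz₀]
    rw [Complex.norm_natCast]
    rw [div_lt_div_iff₀ (by positivity) (by positivity)]
    have hrm : r ^ m = r ^ (m - 1) * r := by
      rw [← pow_succ]; congr 1; omega
    calc M * ((m:ℝ) * r ^ (m-1)) = (m * M / r) * (r ^ (m-1) * r) := by
          field_simp
      _ < ‖p.derivative.eval z₀‖ * (r ^ (m-1) * r) := by
          apply mul_lt_mul_of_pos_right hcon (by positivity)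
      _ = ‖p.derivative.eval z₀‖ * r ^ m := by rw [hrm]
  set G : ℂ[X] := p - C lam * X ^ m with hG
  have hcoeffm : ‖p.coeff m‖ ≤ M / r ^ m := coeff_bound m p hp hr hM
  have hGcoeff : G.coeff m = p.coeff m - lam := by
    rw [hG, coeff_sub, coeff_C_mul, coeff_X_pow, if_pos rfl, mul_one]
  have hGcoeffne : G.coeff m ≠ 0 := by
    rw [hGcoeff]
    intro h
    have : p.coeff m = lam := by linear_combination h
    rw [this] at hcoeffm
    linarith
  have hGne : G ≠ 0 := fun h => hGcoeffne (by rw [h, coeff_zero])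
  have hGdeg : 1 ≤ G.natDegree := by
    have := le_natDegree_of_ne_zero hGcoeffne
    omega
  have hGroots : ∀ a ∈ G.roots, ‖a‖ < r := by
    intro a ha
    by_contra hle
    push_neg at hle
    have haroot : G.eval a = 0 := (Polynomial.mem_roots hGne).mp ha
    have hpa : p.eval a = lam * a ^ m := by
      rw [hG] at haroot
      simp only [eval_sub, eval_mul, eval_C, eval_pow, eval_X] at haroot
      linear_combination haroot
    have hgrow := growth_bound m p hp hr hM a hle
    rw [hpa, norm_mul, norm_pow] at hgrow
    have hapos : (0:ℝ) < ‖a‖ := lt_of_lt_of_le hr hle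
    have : ‖lam‖ * ‖a‖ ^ m ≤ (M / r ^ m) * ‖a‖ ^ m := hgrow
    have h2 : ‖lam‖ ≤ M / r ^ m := le_of_mul_le_mul_right this (by positivity)
    linarith
  have hGcrit : G.derivative.eval z₀ = 0 := by
    rw [hG, derivative_sub, derivative_C_mul, derivative_X_pow, eval_sub, eval_mul, eval_C]
    simp only [eval_mul, eval_C, eval_pow, eval_X, eval_natCast]
    rw [hlam]
    field_simp
    rw [div_self (Nat.cast_ne_zero.mpr (by omega)), sub_self, mul_zero]
  exact no_crit_outside hr hGne hGdeg hGroots (le_of_eq hz₀.symm) hGcrit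

open scoped Quaternion
open Quaternion

def sig (x y z : ℝ) (w : ℂ) : ℍ := ⟨w.re, w.im * x, w.im * y, w.im * z⟩

def piC (x y z : ℝ) (p : ℍ) : ℂ := ⟨p.re, p.imI * x + p.imJ * y + p.imK * z⟩

@[simp] theorem sig_re (x y z : ℝ) (w : ℂ) : (sig x y z w).re = w.re := rfl
@[simp] theorem sig_imI (x y z : ℝ) (w : ℂ) : (sig x y z w).imI = w.im * x := rfl
@[simp] theorem sig_imJ (x y z : ℝ) (w : ℂ) : (sig x y z w).imJ = w.im * y := rfl
@[simp] theorem sig_imK (x y z : ℝ) (w : ℂ) : (sig x y z w).imK = w.im * z := rfl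

@[simp] theorem piC_re (x y z : ℝ) (p : ℍ) : (piC x y z p).re = p.re := rfl
@[simp] theorem piC_im (x y z : ℝ) (p : ℍ) :
    (piC x y z p).im = p.imI * x + p.imJ * y + p.imK * z := rfl

theorem sig_one (x y z : ℝ) : sig x y z 1 = 1 := by
  ext <;> simp

theorem sig_mul {x y z : ℝ} (h : x ^ 2 + y ^ 2 + z ^ 2 = 1) (w₁ w₂ : ℂ) :
    sig x y z (w₁ * w₂) = sig x y z w₁ * sig x y z w₂ := by
  ext
  · show (w₁ * w₂).re = _
    rw [Complex.mul_re]
    simp only [re_mul, sig_re, sig_imI, sig_imJ, sig_imK]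
    linear_combination (w₁.im * w₂.im) * h
  · show (w₁ * w₂).im * x = _
    rw [Complex.mul_im]
    simp only [imI_mul, sig_re, sig_imI, sig_imJ, sig_imK]
    ring
  · show (w₁ * w₂).im * y = _
    rw [Complex.mul_im]
    simp only [imJ_mul, sig_re, sig_imI, sig_imJ, sig_imK]
    ring
  · show (w₁ * w₂).im * z = _
    rw [Complex.mul_im]
    simp only [imK_mul, sig_re, sig_imI, sig_imJ, sig_imK]
    ring

theorem sig_pow {x y z : ℝ} (h : x ^ 2 + y ^ 2 + z ^ 2 = 1) (w : ℂ) (n : ℕ) :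
    sig x y z (w ^ n) = sig x y z w ^ n := by
  induction n with
  | zero => simpa using sig_one x y z
  | succ n ih => rw [pow_succ, pow_succ, sig_mul h, ih]

theorem sig_real (x y z : ℝ) (t : ℝ) : sig x y z ((t : ℂ)) = (t : ℍ) := by
  ext <;> simp

theorem norm_sig {x y z : ℝ} (h : x ^ 2 + y ^ 2 + z ^ 2 = 1) (w : ℂ) :
    ‖sig x y z w‖ = ‖w‖ := by
  have h1 : normSq (sig x y z w) = Complex.normSq w := by
    rw [normSq_def', Complex.normSq_apply]
    simp only [sig_re, sig_imI, sig_imJ, sig_imK]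
    linear_combination (w.im ^ 2) * h
  rw [norm_eq_sqrt_real_inner, inner_self, h1, Complex.norm_def]

theorem piC_add (x y z : ℝ) (p q : ℍ) :
    piC x y z (p + q) = piC x y z p + piC x y z q := by
  apply Complex.ext <;> simp <;> ring

theorem piC_zero (x y z : ℝ) : piC x y z 0 = 0 := by
  apply Complex.ext <;> simp

def piA (x y z : ℝ) : ℍ →+ ℂ where
  toFun := piC x y z
  map_zero' := piC_zero x y z
  map_add' := piC_add x y z

theorem piC_slice_mul {x y z : ℝ} (h : x ^ 2 + y ^ 2 + z ^ 2 = 1) (w : ℂ) (p : ℍ) :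
    piC x y z (sig x y z w * p) = w * piC x y z p := by
  apply Complex.ext
  · show (sig x y z w * p).re = _
    rw [Complex.mul_re]
    simp only [re_mul, sig_re, sig_imI, sig_imJ, sig_imK, piC_re, piC_im]
    ring
  · show (sig x y z w * p).imI * x + (sig x y z w * p).imJ * y + (sig x y z w * p).imK * z = _
    rw [Complex.mul_im]
    simp only [imI_mul, imJ_mul, imK_mul, sig_re, sig_imI, sig_imJ, sig_imK, piC_re, piC_im]
    linear_combination (w.im * p.re) * h

theorem piC_real (x y z : ℝ) (t : ℝ) : piC x y z ((t : ℍ)) = (t : ℂ) := by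
  apply Complex.ext <;> simp

theorem piC_norm_le {x y z : ℝ} (h : x ^ 2 + y ^ 2 + z ^ 2 = 1) (p : ℍ) :
    ‖piC x y z p‖ ≤ ‖p‖ := by
  have h1 : Complex.normSq (piC x y z p) ≤ normSq p := by
    rw [Complex.normSq_apply, normSq_def']
    simp only [piC_re, piC_im]
    nlinarith [sq_nonneg (p.imI * y - p.imJ * x), sq_nonneg (p.imI * z - p.imK * x),
      sq_nonneg (p.imJ * z - p.imK * y), sq_nonneg p.imI, sq_nonneg p.imJ, sq_nonneg p.imK,
      sq_nonneg p.re]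
  rw [show ‖p‖ = Real.sqrt (normSq p) by rw [norm_eq_sqrt_real_inner, inner_self],
    Complex.norm_def]
  exact Real.sqrt_le_sqrt h1

theorem exists_slice (q₀ : ℍ) :
    ∃ (x y z : ℝ) (w : ℂ), x ^ 2 + y ^ 2 + z ^ 2 = 1 ∧ sig x y z w = q₀ ∧ ‖w‖ = ‖q₀‖ := by
  set s : ℝ := Real.sqrt (q₀.imI ^ 2 + q₀.imJ ^ 2 + q₀.imK ^ 2) with hs
  have hsum : (0:ℝ) ≤ q₀.imI ^ 2 + q₀.imJ ^ 2 + q₀.imK ^ 2 := by positivity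
  have hssq : s ^ 2 = q₀.imI ^ 2 + q₀.imJ ^ 2 + q₀.imK ^ 2 := Real.sq_sqrt hsum
  rcases eq_or_ne s 0 with h0 | h0
  · have him : q₀.imI = 0 ∧ q₀.imJ = 0 ∧ q₀.imK = 0 := by
      rw [h0] at hssq
      refine ⟨?_, ?_, ?_⟩ <;> nlinarith [sq_nonneg q₀.imI, sq_nonneg q₀.imJ, sq_nonneg q₀.imK]
    refine ⟨1, 0, 0, ⟨q₀.re, 0⟩, by norm_num, ?_, ?_⟩
    · ext <;> simp [him.1, him.2.1, him.2.2]
    · have : ‖q₀‖ = Real.sqrt (normSq q₀) := by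
        rw [norm_eq_sqrt_real_inner, inner_self]
      rw [this, Complex.norm_def, normSq_def', Complex.normSq_mk,
        him.1, him.2.1, him.2.2]
      norm_num [pow_two]
  · have hspos : 0 < s := lt_of_le_of_ne (Real.sqrt_nonneg _) (Ne.symm h0)
    refine ⟨q₀.imI / s, q₀.imJ / s, q₀.imK / s, ⟨q₀.re, s⟩, ?_, ?_, ?_⟩
    · field_simp
      linarith [hssq]
    · ext <;> simp <;> field_simp
    · have : ‖q₀‖ = Real.sqrt (normSq q₀) := by
        rw [norm_eq_sqrt_real_inner, inner_self]
      rw [this, Complex.norm_def, normSq_def', Complex.normSq_mk]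
      congr 1
      linear_combination hssq

theorem quat_bernstein_pointwise {m : ℕ} (hm : 1 ≤ m) (b : ℕ → ℍ) {r M : ℝ} (hr : 0 < r)
    (hM0 : 0 ≤ M)
    (hM : ∀ q : ℍ, ‖q‖ = r → ‖∑ e ∈ Finset.range (m+1), q ^ e * b e‖ ≤ M)
    {q₀ : ℍ} (hq₀ : ‖q₀‖ = r) :
    ‖∑ e ∈ Finset.range (m+1), (e : ℍ) * q₀ ^ (e-1) * b e‖ ≤ m * M / r := by
  classical
  set D := ∑ e ∈ Finset.range (m+1), (e:ℍ) * q₀ ^ (e-1) * b e with hD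
  rcases eq_or_ne D 0 with h0 | hDne
  · rw [h0, norm_zero]; positivity
  obtain ⟨x, y, z, w₀, hxyz, hsig, hw₀⟩ := exists_slice q₀
  rw [hq₀] at hw₀
  have hDnorm : (0:ℝ) < ‖D‖ := norm_pos_iff.mpr hDne
  set u : ℍ := ‖D‖⁻¹ • star D with hu
  have hDu : D * u = ((‖D‖ : ℝ) : ℍ) := by
    rw [hu, mul_smul_comm, self_mul_star, normSq_eq_norm_mul_self, smul_coe]
    congr 1
    field_simp
  have hunorm : ‖u‖ = 1 := by
    rw [hu, norm_smul, norm_star, Real.norm_eq_abs, abs_of_pos (by positivity)]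
    field_simp
  set p : Polynomial ℂ :=
    ∑ e ∈ Finset.range (m+1), Polynomial.C (piC x y z (b e * u)) * Polynomial.X ^ e with hp
  have hdeg : p.natDegree ≤ m := by
    rw [hp]
    apply Polynomial.natDegree_sum_le_of_forall_le
    intro e he
    rw [Finset.mem_range, Nat.lt_succ_iff] at he
    calc (Polynomial.C (piC x y z (b e * u)) * Polynomial.X ^ e).natDegree
        ≤ (Polynomial.C (piC x y z (b e * u))).natDegree + (Polynomial.X ^ e : ℂ[X]).natDegree :=
          Polynomial.natDegree_mul_le
      _ ≤ e := by rw [Polynomial.natDegree_C, Polynomial.natDegree_X_pow]; omega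
      _ ≤ m := he
  have heval : ∀ w : ℂ, p.eval w
      = piC x y z ((∑ e ∈ Finset.range (m+1), (sig x y z w) ^ e * b e) * u) := by
    intro w
    rw [Finset.sum_mul]
    have : ∀ e ∈ Finset.range (m+1),
        (sig x y z w) ^ e * b e * u = sig x y z (w ^ e) * (b e * u) := by
      intro e _
      rw [sig_pow hxyz, mul_assoc]
    rw [Finset.sum_congr rfl this]
    rw [show (piC x y z : ℍ → ℂ) = (piA x y z : ℍ → ℂ) from rfl, map_sum]
    rw [hp, Polynomial.eval_finset_sum]
    refine Finset.sum_congr rfl fun e _ => ?_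
    show _ = piC x y z _
    rw [piC_slice_mul hxyz, Polynomial.eval_mul, Polynomial.eval_C, Polynomial.eval_pow,
      Polynomial.eval_X, mul_comm]
  have hMp : ∀ w : ℂ, ‖w‖ = r → ‖p.eval w‖ ≤ M := by
    intro w hwr
    rw [heval w]
    calc ‖piC x y z ((∑ e ∈ Finset.range (m+1), (sig x y z w) ^ e * b e) * u)‖
        ≤ ‖(∑ e ∈ Finset.range (m+1), (sig x y z w) ^ e * b e) * u‖ := piC_norm_le hxyz _
      _ = ‖∑ e ∈ Finset.range (m+1), (sig x y z w) ^ e * b e‖ * ‖u‖ := norm_mul _ _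
      _ = ‖∑ e ∈ Finset.range (m+1), (sig x y z w) ^ e * b e‖ := by rw [hunorm, mul_one]
      _ ≤ M := hM _ (by rw [norm_sig hxyz, hwr])
  have hderiv : p.derivative.eval w₀ = ((‖D‖ : ℝ) : ℂ) := by
    have h1 : p.derivative.eval w₀
        = ∑ e ∈ Finset.range (m+1), piC x y z (b e * u) * ((e : ℂ) * w₀ ^ (e-1)) := by
      rw [hp, Polynomial.derivative_sum, Polynomial.eval_finset_sum]
      refine Finset.sum_congr rfl fun e _ => ?_
      rw [Polynomial.derivative_C_mul, Polynomial.derivative_X_pow]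
      simp [mul_assoc]
    have h2 : ∀ e ∈ Finset.range (m+1),
        piC x y z (b e * u) * ((e : ℂ) * w₀ ^ (e-1))
          = piC x y z ((e : ℍ) * q₀ ^ (e-1) * (b e * u)) := by
      intro e _
      have : (e : ℍ) * q₀ ^ (e-1) = sig x y z ((e : ℂ) * w₀ ^ (e-1)) := by
        rw [sig_mul hxyz, sig_pow hxyz, hsig]
        congr 1
        rw [show ((e:ℕ) : ℂ) = ((e : ℝ) : ℂ) by push_cast; ring, sig_real]
        push_cast
        ring
      rw [this, piC_slice_mul hxyz, mul_comm]
    rw [h1, Finset.sum_congr rfl h2,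
      show (piC x y z : ℍ → ℂ) = (piA x y z : ℍ → ℂ) from rfl, ← map_sum]
    have h3 : ∑ e ∈ Finset.range (m+1), (e : ℍ) * q₀ ^ (e-1) * (b e * u) = D * u := by
      rw [hD, Finset.sum_mul]
      exact Finset.sum_congr rfl fun e _ => by simp [mul_assoc]
    show piC x y z _ = _
    rw [h3, hDu, piC_real]
  have hfin := complex_bernstein hm p hdeg hr hMp hw₀
  rw [hderiv, Complex.norm_real, Real.norm_eq_abs, abs_of_pos hDnorm] at hfin
  exact hfin

def Sset (r : ℝ) (m : ℕ) (b : ℕ → ℍ) : Set ℝ :=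
  {y : ℝ | ∃ q : ℍ, ‖q‖ = r ∧ y = ‖∑ e ∈ Finset.range (m+1), q ^ e * b e‖}

theorem Sset_bddAbove (r : ℝ) (m : ℕ) (b : ℕ → ℍ) : BddAbove (Sset r m b) := by
  refine ⟨∑ e ∈ Finset.range (m+1), r ^ e * ‖b e‖, ?_⟩
  rintro y ⟨q, hq, rfl⟩
  calc ‖∑ e ∈ Finset.range (m+1), q ^ e * b e‖
      ≤ ∑ e ∈ Finset.range (m+1), ‖q ^ e * b e‖ := norm_sum_le _ _
    _ = ∑ e ∈ Finset.range (m+1), r ^ e * ‖b e‖ := by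
        refine Finset.sum_congr rfl fun e _ => ?_
        rw [norm_mul, norm_pow, hq]

theorem Sset_nonempty {r : ℝ} (hr : 0 < r) (m : ℕ) (b : ℕ → ℍ) : (Sset r m b).Nonempty := by
  refine ⟨_, (r : ℍ), ?_, rfl⟩
  rw [Quaternion.norm_coe, Real.norm_eq_abs, abs_of_pos hr]

theorem Sset_sSup_nonneg {r : ℝ} (hr : 0 < r) (m : ℕ) (b : ℕ → ℍ) :
    0 ≤ sSup (Sset r m b) := by
  obtain ⟨y, hy⟩ := Sset_nonempty hr m b
  have h1 : y ≤ sSup (Sset r m b) := le_csSup (Sset_bddAbove r m b) hy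
  obtain ⟨q, hq, rfl⟩ := hy
  exact le_trans (norm_nonneg _) h1

theorem Sset_le_sSup {r : ℝ} (m : ℕ) (b : ℕ → ℍ) (q : ℍ) (hq : ‖q‖ = r) :
    ‖∑ e ∈ Finset.range (m+1), q ^ e * b e‖ ≤ sSup (Sset r m b) :=
  le_csSup (Sset_bddAbove r m b) ⟨q, hq, rfl⟩

theorem bernstein_step (m : ℕ) (b : ℕ → ℍ) {r : ℝ} (hr : 0 < r) :
    sSup (Sset r m (fun e => ((e+1 : ℕ) : ℍ) * b (e+1)))
      ≤ ((m+1 : ℕ) : ℝ) / r * sSup (Sset r (m+1) b) := by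
  have hMnn := Sset_sSup_nonneg hr (m+1) b
  have hrhs : 0 ≤ ((m+1 : ℕ) : ℝ) / r * sSup (Sset r (m+1) b) :=
    mul_nonneg (by positivity) hMnn
  apply Real.sSup_le _ hrhs
  rintro y ⟨q₀, hq₀, rfl⟩
  have key := quat_bernstein_pointwise (m := m+1) (by omega) b hr hMnn
    (fun q hq => Sset_le_sSup (m+1) b q hq) hq₀
  have hshift : ∑ e ∈ Finset.range (m+1+1), (e : ℍ) * q₀ ^ (e-1) * b e
      = ∑ e ∈ Finset.range (m+1), q₀ ^ e * (((e+1 : ℕ) : ℍ) * b (e+1)) := by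
    rw [Finset.sum_range_succ']
    simp only [Nat.cast_zero, zero_mul, add_zero]
    refine Finset.sum_congr rfl fun i _ => ?_
    have h1 : i + 1 - 1 = i := rfl
    rw [h1, ← mul_assoc, (Nat.cast_commute ((i:ℕ)+1) (q₀ ^ i)).eq]
  rw [hshift] at key
  calc ‖∑ e ∈ Finset.range (m+1), q₀ ^ e * (((e+1 : ℕ) : ℍ) * b (e+1))‖
      ≤ ((m+1 : ℕ) : ℝ) * sSup (Sset r (m+1) b) / r := by exact_mod_cast key
    _ = ((m+1 : ℕ) : ℝ) / r * sSup (Sset r (m+1) b) := by ring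

end BernsteinAux

open scoped Quaternion

theorem stmt_12 (n : ℕ) (hn : 1 ≤ n) (a : ℕ → ℍ[ℝ]) (han : a n ≠ 0)
    (r : ℝ) (hr : 0 < r) (k : ℕ) (hk1 : 1 ≤ k) (hkn : k ≤ n) :
    sSup {y : ℝ | ∃ q : ℍ[ℝ], ‖q‖ = r ∧
        y = ‖∑ j ∈ Finset.range (n + 1),
              (Nat.descFactorial j k : ℍ[ℝ]) * q ^ (j - k) * a j‖}
      ≤ ((Nat.descFactorial n k : ℝ) / r ^ k) *
        sSup {y : ℝ | ∃ q : ℍ[ℝ], ‖q‖ = r ∧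
          y = ‖∑ j ∈ Finset.range (n + 1), q ^ j * a j‖} := by
  classical
  open BernsteinAux in
  set bcoef : ℕ → ℕ → ℍ[ℝ] :=
    fun k e => ((Nat.descFactorial (k+e) k : ℍ[ℝ]) * a (k+e)) with hbcoef
  have claimA : ∀ k : ℕ, k ≤ n → ∀ q : ℍ[ℝ],
      ∑ j ∈ Finset.range (n + 1), (Nat.descFactorial j k : ℍ[ℝ]) * q ^ (j - k) * a j
        = ∑ e ∈ Finset.range (n - k + 1), q ^ e * bcoef k e := by
    intro k hk q
    rw [Finset.range_eq_Ico,
      ← Finset.sum_Ico_consecutive _ (Nat.zero_le k) (by omega : k ≤ n + 1)]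
    have hzero : ∑ j ∈ Finset.Ico 0 k,
        (Nat.descFactorial j k : ℍ[ℝ]) * q ^ (j - k) * a j = 0 := by
      apply Finset.sum_eq_zero
      intro j hj
      rw [Finset.mem_Ico] at hj
      rw [Nat.descFactorial_eq_zero_iff_lt.mpr hj.2]
      simp
    rw [hzero, zero_add, Finset.sum_Ico_eq_sum_range]
    have hcard : n + 1 - k = n - k + 1 := by omega
    rw [hcard]
    refine Finset.sum_congr rfl fun e _ => ?_
    have h1 : k + e - k = e := by omega
    rw [h1, hbcoef, ← mul_assoc, (Nat.cast_commute (Nat.descFactorial (k+e) k) (q ^ e)).eq,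
      mul_assoc]
  have claimB : ∀ k : ℕ, bcoef (k+1) = fun e => ((e+1 : ℕ) : ℍ[ℝ]) * bcoef k (e+1) := by
    intro k
    funext e
    rw [hbcoef]
    simp only
    have hidx : k + 1 + e = k + (e + 1) := by omega
    rw [hidx, Nat.descFactorial_succ]
    have h2 : k + (e + 1) - k = e + 1 := by omega
    rw [h2, Nat.cast_mul, mul_assoc]
  have main : ∀ k : ℕ, k ≤ n →
      sSup (Sset r (n - k) (bcoef k))
        ≤ ((Nat.descFactorial n k : ℝ) / r ^ k) * sSup (Sset r n (bcoef 0)) := by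
    intro k
    induction k with
    | zero =>
      intro _
      simp [Nat.sub_zero, Nat.descFactorial]
    | succ k ih =>
      intro hk1
      have hk : k ≤ n := by omega
      have ihk := ih hk
      have h1 := bernstein_step (n - (k+1)) (bcoef k) hr
      have hidx : n - (k+1) + 1 = n - k := by omega
      rw [hidx] at h1
      rw [← claimB k] at h1
      have h2 : sSup (Sset r (n - (k+1)) (bcoef (k+1)))
          ≤ ((n - k : ℕ) : ℝ) / r * (((Nat.descFactorial n k : ℝ) / r ^ k)
              * sSup (Sset r n (bcoef 0))) := by
        refine le_trans h1 ?_
        exact mul_le_mul_of_nonneg_left ihk (by positivity)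
      refine le_trans h2 (le_of_eq ?_)
      rw [Nat.descFactorial_succ, Nat.cast_mul, Nat.cast_sub hk, pow_succ]
      ring
  have hLHS : {y : ℝ | ∃ q : ℍ[ℝ], ‖q‖ = r ∧
      y = ‖∑ j ∈ Finset.range (n + 1),
            (Nat.descFactorial j k : ℍ[ℝ]) * q ^ (j - k) * a j‖}
      = Sset r (n - k) (bcoef k) := by
    ext y
    simp only [Sset, Set.mem_setOf_eq, claimA k hkn]
  have hRHS : {y : ℝ | ∃ q : ℍ[ℝ], ‖q‖ = r ∧
      y = ‖∑ j ∈ Finset.range (n + 1), q ^ j * a j‖} = Sset r n (bcoef 0) := by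
    have hA0 : ∀ q : ℍ[ℝ], ∑ j ∈ Finset.range (n + 1), q ^ j * a j
        = ∑ e ∈ Finset.range (n - 0 + 1), q ^ e * bcoef 0 e := by
      intro q
      rw [← claimA 0 (Nat.zero_le n) q]
      refine Finset.sum_congr rfl fun j _ => ?_
      simp [Nat.descFactorial]
    ext y
    simp only [Sset, Set.mem_setOf_eq, hA0, Nat.sub_zero]
  rw [hLHS, hRHS]
  exact main k hkn
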